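/- Assume MA(σ-centered) (equivalently 𝔭 = 2^{ℵ₀}). Let 𝒢 ⊆ Sym(Ω) be strongly independent with |𝒢| < 2^{ℵ₀}, and let M₁ and M₂ be isomorphic inductively flexible relational structures with universe Ω. Then there exists an isomorphism f : M₁ → M₂ such that 𝒢 ∪ {f} is strongly independent. -/

import Mathlib

def StronglyIndependent {Ω : Type} (G : Set (Equiv.Perm Ω)) : Prop :=
  ∀ (n : ℕ) (w : FreeGroup (Fin (n + 1))), w ≠ 1 →
    ∀ f : Fin (n + 1) → Equiv.Perm Ω, Function.Injective f → (∀ i, f i ∈ G) →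
      {x : Ω | FreeGroup.lift f w x = x}.Finite

def FlexibleWitness {Ω : Type} (Aut : Set (Equiv.Perm Ω)) (F : Set (Set (Ω × Ω))) : Prop :=
  (∀ f ∈ F, Set.Finite f) ∧
  (∀ f ∈ F, ∃ g ∈ Aut, ∀ p ∈ f, g p.1 = p.2) ∧
  ∅ ∈ F ∧
  (∀ f ∈ F, Prod.swap '' f ∈ F) ∧
  (∀ f ∈ F, ∀ a : Ω, a ∉ Prod.fst '' f → {b : Ω | insert (a, b) f ∈ F}.Infinite)

/-- A relational structure on universe `Ω` with relation symbols indexed by `I` of arities `ar`. -/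
structure RelStruct (Ω I : Type) (ar : I → ℕ) where
  rel : ∀ i : I, (Fin (ar i) → Ω) → Prop

/-- `g` is an isomorphism from `M` to `N` (both with universe `Ω`), by transport of structure. -/
def IsIso {Ω I : Type} {ar : I → ℕ} (g : Equiv.Perm Ω) (M N : RelStruct Ω I ar) : Prop :=
  ∀ (i : I) (t : Fin (ar i) → Ω), N.rel i (fun k => g (t k)) ↔ M.rel i t

def InductivelyFlexible {Ω I : Type} {ar : I → ℕ} (M : RelStruct Ω I ar) : Prop :=
  ∃ F : Set (Set (Ω × Ω)), FlexibleWitness {g | IsIso g M M} F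

def Centered {P : Type} [Preorder P] (Q : Set P) : Prop :=
  ∀ S : Finset P, ↑S ⊆ Q → ∃ p : P, ∀ q ∈ S, q ≤ p

def SigmaCentered (P : Type) [Preorder P] : Prop :=
  ∃ C : ℕ → Set P, (∀ n, Centered (C n)) ∧ (⋃ n, C n) = Set.univ

/-- Martin's Axiom for σ-centered partial orders: for any nonempty σ-centered partial order
and any family of fewer than continuum many open dense subsets, there is a filter meeting
every member of the family. -/
def MASigmaCentered : Prop :=
  ∀ (P : Type) [Preorder P], Nonempty P → SigmaCentered P →
    ∀ 𝒟 : Set (Set P),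
      (∀ D ∈ 𝒟, (∀ p ∈ D, ∀ q, p ≤ q → q ∈ D) ∧ (∀ p, ∃ q ∈ D, p ≤ q)) →
      Cardinal.mk ↥𝒟 < Cardinal.continuum →
      ∃ Q : Set P, Q.Nonempty ∧
        (∀ q₀ ∈ Q, ∀ q₁ ∈ Q, ∃ q ∈ Q, q₀ ≤ q ∧ q₁ ≤ q) ∧
        (∀ p q : P, p ≤ q → q ∈ Q → p ∈ Q) ∧
        ∀ D ∈ 𝒟, (Q ∩ D).Nonempty

open Classical
noncomputable section

def StronglyIndependentX {Ω : Type} (G : Set (Equiv.Perm Ω)) : Prop :=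
  ∀ (n : ℕ) (w : FreeGroup (Fin (n + 1))), w ≠ 1 →
    ∀ f : Fin (n + 1) → Equiv.Perm Ω, Function.Injective f → (∀ i, f i ∈ G) →
      {x : Ω | FreeGroup.lift f w x = x}.Finite

namespace S9

variable {Ω : Type} {G : Type}

theorem lift_map {α β M : Type} [Group M] (f : β → M) (τ : α → β) (w : FreeGroup α) :
    FreeGroup.lift f (FreeGroup.map τ w) = FreeGroup.lift (f ∘ τ) w := by
  have : (FreeGroup.lift f).comp (FreeGroup.map τ) = FreeGroup.lift (f ∘ τ) := by
    apply FreeGroup.ext_hom; intro a; simp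
  exact DFunLike.congr_fun this w

theorem lift_congr_letters {α M : Type} [DecidableEq α] [Group M] (f g : α → M) (w : FreeGroup α)
    (h : ∀ p ∈ w.toWord, f p.1 = g p.1) :
    FreeGroup.lift f w = FreeGroup.lift g w := by
  conv_lhs => rw [← FreeGroup.mk_toWord (x := w)]
  conv_rhs => rw [← FreeGroup.mk_toWord (x := w)]
  rw [FreeGroup.lift_mk, FreeGroup.lift_mk]
  congr 1
  exact List.map_congr_left fun p hp => by rw [h p hp]

theorem map_congr_letters {α β : Type} [DecidableEq α] (f g : α → β) (w : FreeGroup α)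
    (h : ∀ p ∈ w.toWord, f p.1 = g p.1) :
    FreeGroup.map f w = FreeGroup.map g w := by
  conv_lhs => rw [← FreeGroup.mk_toWord (x := w)]
  conv_rhs => rw [← FreeGroup.mk_toWord (x := w)]
  rw [FreeGroup.map.mk, FreeGroup.map.mk]
  congr 1
  exact List.map_congr_left fun p hp => by rw [h p hp]

theorem keyFix {G : Set (Equiv.Perm Ω)} (hsi : StronglyIndependentX G)
    (u : FreeGroup ↥G) (hu : u ≠ 1) :
    {x : Ω | FreeGroup.lift (fun g : ↥G => (g : Equiv.Perm Ω)) u x = x}.Finite := by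
  classical
  set S : Finset ↥G := u.toWord.toFinset.image Prod.fst with hS
  have hmemS : ∀ p ∈ u.toWord, p.1 ∈ S := fun p hp =>
    Finset.mem_image.2 ⟨p, List.mem_toFinset.2 hp, rfl⟩
  have hSne : S.Nonempty := by
    rcases List.exists_mem_of_ne_nil u.toWord (by
      simpa [FreeGroup.toWord_eq_nil_iff] using hu) with ⟨p, hp⟩
    exact ⟨p.1, hmemS p hp⟩
  obtain ⟨n, hn⟩ : ∃ n, S.card = n + 1 := by
    have := Finset.card_pos.2 hSne
    exact ⟨S.card - 1, by omega⟩
  have e : ↥S ≃ Fin (n+1) := S.equivFin.trans (finCongr hn)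
  set j : Fin (n+1) → ↥G := fun i => ((e.symm i : ↥S) : ↥G) with hj
  set f : Fin (n+1) → Equiv.Perm Ω := fun i => ((j i : ↥G) : Equiv.Perm Ω) with hf
  have hjinj : Function.Injective j :=
    Subtype.val_injective.comp (Equiv.injective _)
  have hfinj : Function.Injective f :=
    Subtype.val_injective.comp hjinj
  set τ : ↥G → Fin (n+1) := fun g => if h : g ∈ S then e ⟨g, h⟩ else 0 with hτ
  have hjτ : ∀ g : ↥G, g ∈ S → j (τ g) = g := by
    intro g hg
    simp only [hτ, dif_pos hg, hj, Equiv.symm_apply_apply]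
  set w' : FreeGroup (Fin (n+1)) := FreeGroup.map τ u with hw'
  have hw'ne : w' ≠ 1 := by
    intro h
    apply hu
    have h1 : FreeGroup.map j w' = 1 := by rw [h]; simp
    rw [hw', FreeGroup.map.comp] at h1
    have h2 : FreeGroup.map (j ∘ τ) u = u := by
      rw [map_congr_letters (j ∘ τ) id u (fun p hp => hjτ p.1 (hmemS p hp))]
      exact FreeGroup.map.id u
    rwa [h2] at h1
  have hlift : FreeGroup.lift f w' = FreeGroup.lift (fun g : ↥G => (g : Equiv.Perm Ω)) u := by
    rw [hw', lift_map]
    exact lift_congr_letters _ _ u fun p hp => by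
      show f (τ p.1) = _
      rw [hf]; simp only; rw [hjτ p.1 (hmemS p hp)]
  have := hsi n w' hw'ne f hfinj (fun i => (j i).2)
  rwa [hlift] at this



abbrev Ltr (G : Type) := Option G × Bool

def StepR (π : G → Equiv.Perm Ω) (s : Set (Ω × Ω)) : Ltr G → Ω → Ω → Prop
  | (none, true), x, y => (x, y) ∈ s
  | (none, false), x, y => (y, x) ∈ s
  | (some g, true), x, y => π g x = y
  | (some g, false), x, y => π g y = x

inductive EvalR (π : G → Equiv.Perm Ω) (s : Set (Ω × Ω)) : List (Ltr G) → Ω → Ω → Prop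
  | nil (x : Ω) : EvalR π s [] x x
  | cons {l L x y z} : StepR π s l x y → EvalR π s L y z → EvalR π s (l :: L) x z

variable {π : G → Equiv.Perm Ω} {s t : Set (Ω × Ω)}

theorem evalR_nil_iff {x y : Ω} : EvalR π s [] x y ↔ x = y :=
  ⟨fun h => by cases h; rfl, fun h => h ▸ EvalR.nil x⟩

theorem evalR_cons_iff {l : Ltr G} {L x z} :
    EvalR π s (l :: L) x z ↔ ∃ y, StepR π s l x y ∧ EvalR π s L y z :=
  ⟨fun h => by cases h with | cons h1 h2 => exact ⟨_, h1, h2⟩,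
   fun ⟨y, h1, h2⟩ => EvalR.cons h1 h2⟩

theorem evalR_append {A B : List (Ltr G)} {x z : Ω} :
    EvalR π s (A ++ B) x z ↔ ∃ y, EvalR π s A x y ∧ EvalR π s B y z := by
  induction A generalizing x with
  | nil => simp [evalR_nil_iff]
  | cons l A ih =>
    simp only [List.cons_append, evalR_cons_iff, ih]
    constructor
    · rintro ⟨m, h1, y, h2, h3⟩; exact ⟨y, ⟨m, h1, h2⟩, h3⟩
    · rintro ⟨y, ⟨m, h1, h2⟩, h3⟩; exact ⟨m, h1, y, h2, h3⟩

theorem stepR_mono (hst : s ⊆ t) {l : Ltr G} {x y} (h : StepR π s l x y) :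
    StepR π t l x y := by
  rcases l with ⟨_ | g, _ | _⟩ <;> simp only [StepR] at * <;> solve_by_elim

theorem evalR_mono (hst : s ⊆ t) {L : List (Ltr G)} {x y} (h : EvalR π s L x y) :
    EvalR π t L x y := by
  induction h with
  | nil => exact EvalR.nil _
  | cons h1 _ ih => exact EvalR.cons (stepR_mono hst h1) ih

def Functional (s : Set (Ω × Ω)) : Prop :=
  (∀ ⦃x y y'⦄, (x, y) ∈ s → (x, y') ∈ s → y = y') ∧
  (∀ ⦃x x' y⦄, (x, y) ∈ s → (x', y) ∈ s → x = x')

theorem stepR_det (hs : Functional s) {l : Ltr G} {x y y'}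
    (h : StepR π s l x y) (h' : StepR π s l x y') : y = y' := by
  rcases l with ⟨_ | g, _ | _⟩ <;> simp only [StepR] at h h'
  · exact hs.2 h h'
  · exact hs.1 h h'
  · exact (π g).injective (h.trans h'.symm)
  · exact h.symm.trans h'

theorem stepR_det_left (hs : Functional s) {l : Ltr G} {x x' y}
    (h : StepR π s l x y) (h' : StepR π s l x' y) : x = x' := by
  rcases l with ⟨_ | g, _ | _⟩ <;> simp only [StepR] at h h'
  · exact hs.1 h h'
  · exact hs.2 h h'
  · exact h.symm.trans h'
  · exact (π g).injective (h.trans h'.symm)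

theorem evalR_det (hs : Functional s) {L : List (Ltr G)} {x y y'}
    (h : EvalR π s L x y) (h' : EvalR π s L x y') : y = y' := by
  induction L generalizing x with
  | nil => rw [evalR_nil_iff] at h h'; rw [← h, ← h']
  | cons l L ih =>
    rcases evalR_cons_iff.1 h with ⟨m, h1, h2⟩
    rcases evalR_cons_iff.1 h' with ⟨m', h1', h2'⟩
    rw [stepR_det hs h1 h1'] at h2
    exact ih h2 h2'

theorem evalR_det_left (hs : Functional s) {L : List (Ltr G)} {x x' y}
    (h : EvalR π s L x y) (h' : EvalR π s L x' y) : x = x' := by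
  induction L generalizing x x' with
  | nil => rw [evalR_nil_iff] at h h'; rw [h, h']
  | cons l L ih =>
    rcases evalR_cons_iff.1 h with ⟨m, h1, h2⟩
    rcases evalR_cons_iff.1 h' with ⟨m', h1', h2'⟩
    have := ih h2 h2'
    rw [← this] at h1'
    exact stepR_det_left hs h1 h1'

/-! pure words -/

def PureL (L : List (Ltr G)) : Prop := ∀ l ∈ L, l.1 ≠ none

def stepP (π : G → Equiv.Perm Ω) : Ltr G → Ω → Ω
  | (none, _), x => x
  | (some g, true), x => π g x
  | (some g, false), x => (π g)⁻¹ x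

def evalP (π : G → Equiv.Perm Ω) : List (Ltr G) → Ω → Ω
  | [], x => x
  | l :: L, x => evalP π L (stepP π l x)

theorem evalP_append {A B : List (Ltr G)} {x : Ω} :
    evalP π (A ++ B) x = evalP π B (evalP π A x) := by
  induction A generalizing x with
  | nil => rfl
  | cons l A ih => simp [evalP, ih]

theorem stepR_pure {l : Ltr G} (hl : l.1 ≠ none) {x y : Ω} :
    StepR π s l x y ↔ stepP π l x = y := by
  rcases l with ⟨_ | g, _ | _⟩
  · exact absurd rfl hl
  · exact absurd rfl hl
  · show (π g) y = x ↔ (π g)⁻¹ x = y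
    constructor
    · intro h; rw [← h]; simp
    · intro h; rw [← h]; simp
  · exact Iff.rfl

theorem evalR_pure {L : List (Ltr G)} (hL : PureL L) {x y : Ω} :
    EvalR π s L x y ↔ evalP π L x = y := by
  induction L generalizing x with
  | nil => simp [evalR_nil_iff, evalP]
  | cons l L ih =>
    rw [evalR_cons_iff]
    constructor
    · rintro ⟨m, h1, h2⟩
      rw [stepR_pure (hL l (List.mem_cons_self))] at h1
      rw [evalP, h1]
      exact (ih (fun l hl => hL l (List.mem_cons_of_mem _ hl))).1 h2
    · intro h
      refine ⟨stepP π l x, (stepR_pure (hL l (List.mem_cons_self))).2 rfl, ?_⟩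
      exact (ih (fun l hl => hL l (List.mem_cons_of_mem _ hl))).2 h


/-! ## Reduced words as lists -/

def RedL {α : Type} (L : List (α × Bool)) : Prop :=
  L.Chain' (fun p q => p.1 = q.1 → p.2 = q.2)

theorem redL_nil {α : Type} : RedL ([] : List (α × Bool)) := List.isChain_nil

theorem RedL.tail {α : Type} {x : α × Bool} {L : List (α × Bool)} (h : RedL (x :: L)) :
    RedL L := List.IsChain.tail h

theorem RedL.infix {α : Type} {L M : List (α × Bool)} (h : RedL L) (hM : M <:+: L) :
    RedL M := List.IsChain.infix h hM

theorem redL_reduce {α : Type} [DecidableEq α] (L : List (α × Bool)) :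
    RedL (FreeGroup.reduce L) := by
  induction L with
  | nil => exact redL_nil
  | cons x L ih =>
    rw [FreeGroup.reduce.cons]
    cases h : FreeGroup.reduce L with
    | nil => simp [RedL, List.Chain']
    | cons y T =>
      rw [h] at ih
      dsimp only
      split_ifs with hc
      · exact ih.tail
      · refine List.isChain_cons_cons.2 ⟨?_, ih⟩
        intro h1
        rcases Bool.eq_or_eq_not x.2 y.2 with h2 | h2
        · exact h2
        · exact absurd ⟨h1, h2⟩ hc

theorem reduce_eq_self {α : Type} [DecidableEq α] {L : List (α × Bool)} (h : RedL L) :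
    FreeGroup.reduce L = L := by
  induction L with
  | nil => rfl
  | cons x L ih =>
    rw [FreeGroup.reduce.cons, ih h.tail]
    cases L with
    | nil => rfl
    | cons y T =>
      dsimp only
      rw [if_neg]
      rintro ⟨h1, h2⟩
      have := List.isChain_cons_cons.1 h
      rw [this.1 h1] at h2
      simp at h2

theorem redL_toWord {α : Type} [DecidableEq α] (u : FreeGroup α) : RedL u.toWord := by
  have := redL_reduce u.toWord
  rwa [FreeGroup.reduce_toWord] at this

theorem mk_ne_one {α : Type} [DecidableEq α] {L : List (α × Bool)} (h : RedL L)
    (hne : L ≠ []) : FreeGroup.mk L ≠ 1 := by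
  intro h1
  apply hne
  have := FreeGroup.toWord_mk (L₁ := L)
  rw [h1, reduce_eq_self h] at this
  rw [← this, FreeGroup.toWord_one]

theorem toWord_of_red {α : Type} [DecidableEq α] {L : List (α × Bool)} (h : RedL L) :
    (FreeGroup.mk L).toWord = L := by
  rw [FreeGroup.toWord_mk, reduce_eq_self h]

theorem redL_reverse {α : Type} {L : List (α × Bool)} (h : RedL L) : RedL L.reverse := by
  simp only [RedL, List.Chain', List.isChain_reverse]
  apply List.IsChain.imp _ h
  intro p q hpq h1
  exact (hpq h1.symm).symm

theorem redL_adj {α : Type} {L A B : List (α × Bool)} {p q : α × Bool} (h : RedL L)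
    (hL : L = A ++ p :: q :: B) : p.1 = q.1 → p.2 = q.2 := by
  have : RedL [p, q] := h.infix ⟨A, B, by rw [hL]; simp⟩
  exact (List.isChain_pair.1 this)

/-- cyclically reduced (as a list) -/
def CycOK {α : Type} (L : List (α × Bool)) : Prop :=
  RedL L ∧ ∀ p q : α × Bool, L.head? = some p → L.getLast? = some q →
    (q.1 = p.1 → q.2 = p.2)


/-! ## Finiteness of constraint sets -/

variable {π : G → Equiv.Perm Ω} {s : Set (Ω × Ω)}

theorem finite_target (hs : Functional s) (v : List (Ltr G)) (c : Ω) :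
    {b : Ω | EvalR π s v b c}.Finite := by
  apply Set.Subsingleton.finite
  intro b1 h1 b2 h2
  exact evalR_det_left hs h1 h2

theorem finite_source (hs : Functional s) (v : List (Ltr G)) (c : Ω) :
    {b : Ω | EvalR π s v c b}.Finite := by
  apply Set.Subsingleton.finite
  intro b1 h1 b2 h2
  exact evalR_det hs h1 h2

theorem finite_bottleneck (hsfin : s.Finite) (hs : Functional s) {v : List (Ltr G)}
    (hv : ∃ l ∈ v, l.1 = (none : Option G)) :
    {b : Ω | ∃ y, EvalR π s v b y}.Finite := by
  obtain ⟨l, hl, hnone⟩ := hv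
  obtain ⟨A, B, rfl⟩ := List.append_of_mem hl
  have hT : ((Prod.fst '' s) ∪ (Prod.snd '' s)).Finite :=
    (hsfin.image _).union (hsfin.image _)
  apply Set.Finite.subset (hT.biUnion (fun m _ => finite_target (π := π) hs A m))
  rintro b ⟨y, hy⟩
  rcases evalR_append.1 hy with ⟨m, hA, hrest⟩
  rcases evalR_cons_iff.1 hrest with ⟨m2, hstep, -⟩
  rcases l with ⟨og, β⟩
  cases hnone
  refine Set.mem_biUnion ?_ hA
  cases β
  · exact Or.inr ⟨(m2, m), hstep, rfl⟩
  · exact Or.inl ⟨(m, m2), hstep, rfl⟩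

theorem finite_fix (hsfin : s.Finite) (hs : Functional s)
    (hpure : ∀ v : List (Ltr G), RedL v → v ≠ [] → PureL v → {x : Ω | evalP π v x = x}.Finite)
    {v : List (Ltr G)} (hred : RedL v) (hne : v ≠ []) :
    {b : Ω | EvalR π s v b b}.Finite := by
  by_cases hmix : ∃ l ∈ v, l.1 = (none : Option G)
  · exact (finite_bottleneck hsfin hs hmix).subset (fun b hb => ⟨b, hb⟩)
  · push_neg at hmix
    have hp : PureL v := fun l hl => hmix l hl
    have : {b : Ω | EvalR π s v b b} = {x : Ω | evalP π v x = x} := by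
      ext b; exact evalR_pure hp
    rw [this]
    exact hpure v hred hne hp

/-! ## First/last use of the new pair -/

section Use

variable {a b : Ω}

theorem step_cases {l : Ltr G} {x y : Ω} (h : StepR π (insert (a, b) s) l x y) :
    StepR π s l x y ∨ ((l = ((none : Option G), true) ∧ x = a ∧ y = b) ∨
      (l = ((none : Option G), false) ∧ x = b ∧ y = a)) := by
  rcases l with ⟨_ | g, _ | _⟩
  · rcases h with h | h
    · right; right; exact ⟨rfl, congrArg Prod.snd h, congrArg Prod.fst h⟩
    · left; exact h
  · rcases h with h | h
    · right; left; exact ⟨rfl, congrArg Prod.fst h, congrArg Prod.snd h⟩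
    · left; exact h
  · left; exact h
  · left; exact h

theorem firstUse {L : List (Ltr G)} {x y : Ω}
    (h : EvalR π (insert (a, b) s) L x y) :
    EvalR π s L x y ∨ ∃ P l R c d, L = P ++ l :: R ∧
      ((l = ((none : Option G), true) ∧ c = a ∧ d = b) ∨
        (l = ((none : Option G), false) ∧ c = b ∧ d = a)) ∧
      EvalR π s P x c ∧ EvalR π (insert (a, b) s) R d y := by
  induction L generalizing x with
  | nil => left; rw [evalR_nil_iff] at h ⊢; exact h
  | cons l L ih =>
    rcases evalR_cons_iff.1 h with ⟨m, hstep, hrest⟩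
    rcases step_cases hstep with hst | hnew
    · rcases ih hrest with h1 | ⟨P, l', R, c, d, rfl, hpat, hP, hR⟩
      · left; exact EvalR.cons hst h1
      · right
        exact ⟨l :: P, l', R, c, d, rfl, hpat, EvalR.cons hst hP, hR⟩
    · right
      rcases hnew with ⟨rfl, hx, hm⟩ | ⟨rfl, hx, hm⟩
      · exact ⟨[], _, L, a, b, rfl, Or.inl ⟨rfl, rfl, rfl⟩, evalR_nil_iff.2 hx, hm ▸ hrest⟩
      · exact ⟨[], _, L, b, a, rfl, Or.inr ⟨rfl, rfl, rfl⟩, evalR_nil_iff.2 hx, hm ▸ hrest⟩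

theorem lastUse {L : List (Ltr G)} {x y : Ω}
    (h : EvalR π (insert (a, b) s) L x y) :
    EvalR π s L x y ∨ ∃ P l R c d, L = P ++ l :: R ∧
      ((l = ((none : Option G), true) ∧ c = a ∧ d = b) ∨
        (l = ((none : Option G), false) ∧ c = b ∧ d = a)) ∧
      EvalR π (insert (a, b) s) P x c ∧ EvalR π s R d y := by
  induction L generalizing x with
  | nil => left; rw [evalR_nil_iff] at h ⊢; exact h
  | cons l L ih =>
    rcases evalR_cons_iff.1 h with ⟨m, hstep, hrest⟩
    rcases ih hrest with h1 | ⟨P, l', R, c, d, rfl, hpat, hP, hR⟩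
    · rcases step_cases hstep with hst | hnew
      · left; exact EvalR.cons hst h1
      · right
        rcases hnew with ⟨rfl, hx, hm⟩ | ⟨rfl, hx, hm⟩
        · exact ⟨[], _, L, a, b, rfl, Or.inl ⟨rfl, rfl, rfl⟩, evalR_nil_iff.2 hx, hm ▸ h1⟩
        · exact ⟨[], _, L, b, a, rfl, Or.inr ⟨rfl, rfl, rfl⟩, evalR_nil_iff.2 hx, hm ▸ h1⟩
    · right
      exact ⟨l :: P, l', R, c, d, rfl, hpat, EvalR.cons hstep hP, hR⟩

end Use


/-! ## candidate segments -/

def cands {G : Type} (L : List (Ltr G)) : Set (List (Ltr G)) :=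
  {v | v.Sublist L} ∪ {v | ∃ P S, P <+: L ∧ S <:+ L ∧ v = S ++ P}

theorem cands_finite {G : Type} (L : List (Ltr G)) : (cands L).Finite := by
  apply Set.Finite.union
  · exact (L.sublists.finite_toSet).subset (fun v hv => List.mem_sublists.2 hv)
  · have h1 : {v | ∃ P S, P <+: L ∧ S <:+ L ∧ v = S ++ P} ⊆
        (fun pr : List (Ltr G) × List (Ltr G) => pr.2 ++ pr.1) ''
          ({P | P ∈ L.inits} ×ˢ {S | S ∈ L.tails}) := by
      rintro v ⟨P, S, hP, hS, rfl⟩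
      exact ⟨(P, S), ⟨(List.mem_inits _ _).2 hP, (List.mem_tails _ _).2 hS⟩, rfl⟩
    exact (((L.inits.finite_toSet).prod (L.tails.finite_toSet)).image _).subset h1

/-! ## The core extension lemma -/

theorem core (π : G → Equiv.Perm Ω)
    (hpure : ∀ v : List (Ltr G), RedL v → v ≠ [] → PureL v → {x : Ω | evalP π v x = x}.Finite)
    (s : Set (Ω × Ω)) (hsfin : s.Finite) (hs : Functional s)
    (a : Ω) (ha : ∀ y, (a, y) ∉ s)
    (WL : Set (List (Ltr G))) (hWLfin : WL.Finite)
    (hWL : ∀ L ∈ WL, L ≠ [] ∧ CycOK L) :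
    ∃ Z : Set Ω, Z.Finite ∧ ∀ b ∉ Z, ∀ L ∈ WL, ∀ x,
      EvalR π (insert (a, b) s) L x x → EvalR π s L x x := by
  classical
  set Z : Set Ω := (Prod.fst '' s) ∪ (Prod.snd '' s) ∪ {a} ∪
    ⋃ L ∈ WL, ⋃ v ∈ cands L,
      ({b : Ω | EvalR π s v b a} ∪ {b : Ω | EvalR π s v a b} ∪
        (if RedL v ∧ v ≠ [] then {b : Ω | EvalR π s v b b} else ∅)) with hZ
  have hZfin : Z.Finite := by
    refine (((hsfin.image _).union (hsfin.image _)).union (Set.finite_singleton a)).union ?_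
    refine Set.Finite.biUnion hWLfin (fun L _ => ?_)
    refine Set.Finite.biUnion (cands_finite L) (fun v _ => ?_)
    refine ((finite_target hs v a).union (finite_source hs v a)).union ?_
    split_ifs with hok
    · exact finite_fix hsfin hs hpure hok.1 hok.2
    · exact Set.finite_empty
  refine ⟨Z, hZfin, ?_⟩
  intro b hbZ L hLW x hev
  obtain ⟨hLne, hLred, hLcyc⟩ : L ≠ [] ∧ RedL L ∧ _ :=
    ⟨(hWL L hLW).1, (hWL L hLW).2.1, (hWL L hLW).2.2⟩
  have hbdom : ∀ y, (b, y) ∉ s := by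
    intro y hy; exact hbZ (Or.inl (Or.inl (Or.inl ⟨(b, y), hy, rfl⟩)))
  have hbran : ∀ z, (z, b) ∉ s := by
    intro z hz; exact hbZ (Or.inl (Or.inl (Or.inr ⟨(z, b), hz, rfl⟩)))
  have hba : b ≠ a := by
    intro h; exact hbZ (Or.inl (Or.inr (by simp [h])))
  have hC1 : ∀ v ∈ cands L, ¬ EvalR π s v b a := by
    intro v hv h
    exact hbZ (Or.inr (Set.mem_biUnion hLW (Set.mem_biUnion hv (Or.inl (Or.inl h)))))
  have hC2 : ∀ v ∈ cands L, ¬ EvalR π s v a b := by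
    intro v hv h
    exact hbZ (Or.inr (Set.mem_biUnion hLW (Set.mem_biUnion hv (Or.inl (Or.inr h)))))
  have hC3 : ∀ v ∈ cands L, RedL v → v ≠ [] → ¬ EvalR π s v b b := by
    intro v hv h1 h2 h
    refine hbZ (Or.inr (Set.mem_biUnion hLW (Set.mem_biUnion hv (Or.inr ?_))))
    rw [if_pos ⟨h1, h2⟩]; exact h
  have ht : Functional (insert (a, b) s) := by
    constructor
    · rintro x1 y1 y2 h1 h2
      rcases Set.mem_insert_iff.1 h1 with h1 | h1 <;>
        rcases Set.mem_insert_iff.1 h2 with h2 | h2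
      · injection h1 with e1 e2; injection h2 with e3 e4; rw [e2, e4]
      · injection h1 with e1 e2; rw [e1] at h2; exact absurd h2 (ha _)
      · injection h2 with e1 e2; rw [e1] at h1; exact absurd h1 (ha _)
      · exact hs.1 h1 h2
    · rintro x1 x2 y1 h1 h2
      rcases Set.mem_insert_iff.1 h1 with h1 | h1 <;>
        rcases Set.mem_insert_iff.1 h2 with h2 | h2
      · injection h1 with e1 e2; injection h2 with e3 e4; rw [e1, e3]
      · injection h1 with e1 e2; rw [e2] at h2; exact absurd h2 (hbran _)
      · injection h2 with e1 e2; rw [e2] at h1; exact absurd h1 (hbran _)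
      · exact hs.2 h1 h2
  by_contra hns
  rcases firstUse hev with h1 | ⟨P, l1, R1, c1, d1, hL1, hpat1, hP, hR1⟩
  · exact hns h1
  rcases lastUse hev with h1 | ⟨P', lk, S, ck, dk, hL2, hpatk, hP', hS⟩
  · exact hns h1
  have hwrap : EvalR π s (S ++ P) dk c1 := evalR_append.2 ⟨x, hS, hP⟩
  have hSPc : (S ++ P) ∈ cands L :=
    Or.inr ⟨P, S, ⟨l1 :: R1, hL1.symm⟩, ⟨P' ++ [lk], by rw [hL2]; simp⟩, rfl⟩
  rcases hpat1 with ⟨hl1, hc1, hd1⟩ | ⟨hl1, hc1, hd1⟩ <;>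
    rcases hpatk with ⟨hlk, hck, hdk⟩ | ⟨hlk, hck, hdk⟩
  · -- first forward (c1 = a), last forward (dk = b) : wrap b → a
    rw [hdk, hc1] at hwrap
    exact hC1 _ hSPc hwrap
  · -- first forward (c1 = a), last backward (dk = a) : HARD CASE
    have hE : P ++ (l1 :: R1) = P' ++ (lk :: S) := hL1.symm.trans hL2
    rcases lt_trichotomy P.length P'.length with hlen | hlen | hlen
    · -- first use strictly before last use
      obtain ⟨M, hP'eq, hR1eq⟩ : ∃ M, P' = P ++ l1 :: M ∧ R1 = M ++ lk :: S := by
        rcases List.append_eq_append_iff.1 hE with ⟨m, hm1, hm2⟩ | ⟨m, hm1, hm2⟩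
        · cases m with
          | nil =>
            rw [List.append_nil] at hm1
            rw [hm1] at hlen
            exact absurd hlen (lt_irrefl _)
          | cons h0 m =>
            rw [List.cons_append, List.cons_eq_cons] at hm2
            obtain ⟨rfl, hm2⟩ := hm2
            exact ⟨m, hm1, hm2⟩
        · have := congrArg List.length hm1
          simp only [List.length_append] at this
          omega
      rcases evalR_append.1 (by rw [hP'eq] at hP'; exact hP') with ⟨m1, hPt, hrest⟩
      have hm1 : m1 = c1 := evalR_det ht hPt (evalR_mono (Set.subset_insert _ _) hP)
      rcases evalR_cons_iff.1 hrest with ⟨m2, hstep, hM⟩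
      have hm2b : m2 = b := by
        rw [hm1, hc1, hl1] at hstep
        have hmem : (a, m2) ∈ insert (a, b) s := hstep
        rcases Set.mem_insert_iff.1 hmem with h | h
        · exact congrArg Prod.snd h
        · exact absurd h (ha m2)
      rw [hm2b, hck] at hM
      -- hM : EvalR t M b b
      rcases firstUse hM with hMs | ⟨M1, l', R2, c', d', hMeq, hpat', hM1, -⟩
      · -- no further use inside M
        have hMne : M ≠ [] := by
          rintro rfl
          have := redL_adj hLred
            (show L = P ++ l1 :: lk :: S by rw [hL1, hR1eq]; simp)
          rw [hl1, hlk] at this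
          simpa using this rfl
        have hMred : RedL M := hLred.infix ⟨P ++ [l1], lk :: S, by rw [hL1, hR1eq]; simp⟩
        have hMc : M ∈ cands L :=
          Or.inl (List.IsInfix.sublist ⟨P ++ [l1], lk :: S, by rw [hL1, hR1eq]; simp⟩)
        exact hC3 M hMc hMred hMne hMs
      · rcases hpat' with ⟨hl', hc', hd'⟩ | ⟨hl', hc', hd'⟩
        · -- next use forward: constraint b → a
          rw [hc'] at hM1
          have hM1c : M1 ∈ cands L := Or.inl (List.IsInfix.sublist
            ⟨P ++ [l1], l' :: R2 ++ lk :: S, by rw [hL1, hR1eq, hMeq]; simp⟩)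
          exact hC1 M1 hM1c hM1
        · -- next use backward: constraint b → b
          rw [hc'] at hM1
          have hM1ne : M1 ≠ [] := by
            rintro rfl
            simp only [List.nil_append] at hMeq
            have := redL_adj hLred
              (show L = P ++ l1 :: l' :: (R2 ++ lk :: S) by rw [hL1, hR1eq, hMeq]; simp)
            rw [hl1, hl'] at this
            simpa using this rfl
          have hM1red : RedL M1 := hLred.infix
            ⟨P ++ [l1], l' :: R2 ++ lk :: S, by rw [hL1, hR1eq, hMeq]; simp⟩
          have hM1c : M1 ∈ cands L := Or.inl (List.IsInfix.sublist
            ⟨P ++ [l1], l' :: R2 ++ lk :: S, by rw [hL1, hR1eq, hMeq]; simp⟩)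
          exact hC3 M1 hM1c hM1red hM1ne hM1
    · -- same position: directions differ
      obtain ⟨hPP, hrest⟩ := List.append_inj hE hlen
      have : l1 = lk := (List.cons_eq_cons.1 hrest).1
      rw [hl1, hlk] at this
      simp at this
    · -- last use strictly before first use: impossible
      obtain ⟨m, hPeq⟩ : ∃ m, P = P' ++ lk :: m := by
        rcases List.append_eq_append_iff.1 hE.symm with ⟨m, hm1, hm2⟩ | ⟨m, hm1, hm2⟩
        · cases m with
          | nil =>
            rw [List.append_nil] at hm1
            rw [hm1] at hlen
            exact absurd hlen (lt_irrefl _)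
          | cons h0 m =>
            rw [List.cons_append, List.cons_eq_cons] at hm2
            obtain ⟨rfl, hm2⟩ := hm2
            exact ⟨m, hm1⟩
        · have := congrArg List.length hm1
          simp only [List.length_append] at this
          omega
      rcases evalR_append.1 (by rw [hPeq] at hP; exact hP) with ⟨m1, hPs, hrest2⟩
      have hm1 : m1 = ck := evalR_det ht (evalR_mono (Set.subset_insert _ _) hPs) hP'
      rcases evalR_cons_iff.1 hrest2 with ⟨m2, hstep, -⟩
      rw [hm1, hck, hlk] at hstep
      exact hbran m2 hstep
  · -- first backward (c1 = b), last forward (dk = b) : wrap b → b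
    rw [hdk, hc1] at hwrap
    by_cases hSe : S = []
    · by_cases hPe : P = []
      · have hhead : L.head? = some l1 := by rw [hL1, hPe]; rfl
        have hlast : L.getLast? = some lk := by
          rw [hL2, hSe, List.getLast?_append_cons]; rfl
        have := hLcyc l1 lk hhead hlast
        rw [hl1, hlk] at this
        simpa using this rfl
      · rw [hSe, List.nil_append] at hwrap
        have hc : P ∈ cands L := Or.inl (hL1 ▸ P.sublist_append_left _)
        exact hC3 P hc (hLred.prefix ⟨l1 :: R1, hL1.symm⟩) hPe hwrap
    · by_cases hPe : P = []
      · rw [hPe, List.append_nil] at hwrap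
        have hc : S ∈ cands L :=
          Or.inl (List.IsSuffix.sublist ⟨P' ++ [lk], by rw [hL2]; simp⟩)
        exact hC3 S hc (hLred.suffix ⟨P' ++ [lk], by rw [hL2]; simp⟩) hSe hwrap
      · have hSred : RedL S := hLred.suffix ⟨P' ++ [lk], by rw [hL2]; simp⟩
        have hPred : RedL P := hLred.prefix ⟨l1 :: R1, hL1.symm⟩
        have hseam : ∀ q ∈ S.getLast?, ∀ p ∈ P.head?, (q.1 = p.1 → q.2 = p.2) := by
          intro q hq p hp
          apply hLcyc p q
          · rw [hL1, List.head?_append_of_ne_nil _ hPe]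
            exact hp
          · rw [hL2, List.getLast?_append_cons]
            have h5 : lk :: S = [lk] ++ S := rfl
            rw [h5, List.getLast?_append_of_ne_nil _ hSe]
            exact hq
        have hSPred : RedL (S ++ P) := List.isChain_append.2 ⟨hSred, hPred, hseam⟩
        exact hC3 _ hSPc hSPred (by simp [hSe]) hwrap
  · -- first backward (c1 = b), last backward (dk = a) : wrap a → b
    rw [hdk, hc1] at hwrap
    exact hC2 _ hSPc hwrap


/-! ## flip transfer (for backward extension) -/

def flipN {G : Type} : Ltr G → Ltr G
  | (none, b) => (none, !b)
  | (some g, b) => (some g, b)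

theorem flipN_fst {G : Type} (l : Ltr G) : (flipN l).1 = l.1 := by
  rcases l with ⟨_ | g, b⟩ <;> rfl

theorem stepR_flip {l : Ltr G} {x y : Ω} :
    StepR π (Prod.swap '' s) (flipN l) x y ↔ StepR π s l x y := by
  rcases l with ⟨_ | g, _ | _⟩
  · show ((x, y) ∈ Prod.swap '' s) ↔ ((y, x) ∈ s)
    rw [Set.image_swap_eq_preimage_swap]
    exact Iff.rfl
  · show ((y, x) ∈ Prod.swap '' s) ↔ ((x, y) ∈ s)
    rw [Set.image_swap_eq_preimage_swap]
    exact Iff.rfl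
  · exact Iff.rfl
  · exact Iff.rfl

theorem evalR_flip {L : List (Ltr G)} {x y : Ω} :
    EvalR π (Prod.swap '' s) (L.map flipN) x y ↔ EvalR π s L x y := by
  induction L generalizing x with
  | nil => simp [evalR_nil_iff]
  | cons l L ih =>
    simp only [List.map_cons, evalR_cons_iff]
    exact exists_congr fun m => and_congr stepR_flip (ih)

theorem redL_flip {L : List (Ltr G)} (h : RedL L) : RedL (L.map flipN) := by
  simp only [RedL, List.Chain', List.isChain_map]
  apply List.IsChain.imp _ h
  intro p q hpq
  rcases p with ⟨_ | g, b⟩ <;> rcases q with ⟨_ | g', b'⟩ <;>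
    simp only [flipN] <;> intro h1 <;> simp_all

theorem cycOK_flip {L : List (Ltr G)} (h : CycOK L) : CycOK (L.map flipN) := by
  refine ⟨redL_flip h.1, ?_⟩
  intro p q hp hq
  rw [List.head?_map] at hp
  rw [List.getLast?_map] at hq
  cases hL : L.head? with
  | none => rw [hL] at hp; simp at hp
  | some p0 =>
    rw [hL] at hp
    cases hL2 : L.getLast? with
    | none => rw [hL2] at hq; simp at hq
    | some q0 =>
      rw [hL2] at hq
      simp only [Option.map_some] at hp hq
      have := h.2 p0 q0 hL hL2
      rw [← Option.some_inj] at *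
      cases hp; cases hq
      rcases p0 with ⟨_ | g, b⟩ <;> rcases q0 with ⟨_ | g', b'⟩ <;>
        simp only [flipN] at * <;> intro h1 <;> simp_all

/-- the backward version of `core` -/
theorem core' (π : G → Equiv.Perm Ω)
    (hpure : ∀ v : List (Ltr G), RedL v → v ≠ [] → PureL v → {x : Ω | evalP π v x = x}.Finite)
    (s : Set (Ω × Ω)) (hsfin : s.Finite) (hs : Functional s)
    (b : Ω) (hb : ∀ z, (z, b) ∉ s)
    (WL : Set (List (Ltr G))) (hWLfin : WL.Finite)
    (hWL : ∀ L ∈ WL, L ≠ [] ∧ CycOK L) :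
    ∃ Z : Set Ω, Z.Finite ∧ ∀ a ∉ Z, ∀ L ∈ WL, ∀ x,
      EvalR π (insert (a, b) s) L x x → EvalR π s L x x := by
  have hs' : Functional (Prod.swap '' s) := by
    constructor
    · rintro x1 y1 y2 ⟨p, hp, hp2⟩ ⟨q, hq, hq2⟩
      rw [Prod.swap_eq_iff_eq_swap] at hp2 hq2
      rw [hp2] at hp; rw [hq2] at hq
      exact hs.2 hp hq
    · rintro x1 x2 y1 ⟨p, hp, hp2⟩ ⟨q, hq, hq2⟩
      rw [Prod.swap_eq_iff_eq_swap] at hp2 hq2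
      rw [hp2] at hp; rw [hq2] at hq
      exact hs.1 hp hq
  have hb' : ∀ z, (b, z) ∉ Prod.swap '' s := by
    rintro z ⟨p, hp, hp2⟩
    rw [Prod.swap_eq_iff_eq_swap] at hp2
    rw [hp2] at hp
    exact hb z hp
  obtain ⟨Z, hZfin, hZ⟩ := core π hpure (Prod.swap '' s) (hsfin.image _) hs' b hb'
    ((fun L => L.map flipN) '' WL) (hWLfin.image _)
    (by
      rintro L2 ⟨L, hL, rfl⟩
      refine ⟨by simpa using (hWL L hL).1, cycOK_flip (hWL L hL).2⟩)
  refine ⟨Z, hZfin, ?_⟩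
  intro a haZ L hLW x hev
  have h1 : EvalR π (Prod.swap '' insert (a, b) s) (L.map flipN) x x := evalR_flip.2 hev
  rw [Set.image_insert_eq] at h1
  have h2 := hZ a haZ (L.map flipN) ⟨L, hLW, rfl⟩ x h1
  exact evalR_flip.1 h2

/-! ## cyclically reduced cores -/

theorem fix_conj {α : Type} (φ : α → Equiv.Perm Ω) (c r : FreeGroup α) :
    {x : Ω | FreeGroup.lift φ (c * r * c⁻¹) x = x} =
      (FreeGroup.lift φ c) '' {x : Ω | FreeGroup.lift φ r x = x} := by
  ext x
  simp only [Set.mem_setOf_eq, Set.mem_image, map_mul, map_inv]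
  constructor
  · intro h
    refine ⟨(FreeGroup.lift φ c)⁻¹ x, ?_, by simp⟩
    have := congrArg ((FreeGroup.lift φ c)⁻¹ : Equiv.Perm Ω) h
    simpa using this
  · rintro ⟨y, hy, rfl⟩
    simp [hy]

theorem exists_cyc_core {α : Type} [DecidableEq α] :
    ∀ (n : ℕ) (u : FreeGroup α), u.toWord.length = n → u ≠ 1 →
    ∃ (c r : FreeGroup α), u = c * r * c⁻¹ ∧ r ≠ 1 ∧ CycOK r.toWord := by
  intro n
  induction n using Nat.strong_induction_on with
  | _ n ih =>
    intro u hlen hu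
    by_cases hcyc : ∀ p q : α × Bool, u.toWord.head? = some p → u.toWord.getLast? = some q →
        (q.1 = p.1 → q.2 = p.2)
    · exact ⟨1, u, by simp, hu, redL_toWord u, hcyc⟩
    · push_neg at hcyc
      obtain ⟨p, q, hp, hq, hq1, hq2⟩ := hcyc
      have hLred : RedL u.toWord := redL_toWord u
      obtain ⟨L', hL'⟩ : ∃ L', u.toWord = p :: L' := by
        cases h : u.toWord with
        | nil => rw [h] at hp; simp at hp
        | cons h0 T =>
          rw [h] at hp
          simp only [List.head?_cons, Option.some_inj] at hp
          exact ⟨T, by rw [hp]⟩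
      have hL'ne : L' ≠ [] := by
        rintro rfl
        rw [hL'] at hq
        simp only [List.getLast?_singleton, Option.some_inj] at hq
        rw [hq] at hq2
        exact hq2 rfl
      obtain ⟨M, q0, hM⟩ : ∃ M q0, L' = M ++ [q0] := by
        rcases List.eq_nil_or_concat L' with h | ⟨M, q0, h⟩
        · exact absurd h hL'ne
        · exact ⟨M, q0, by simpa [List.concat_eq_append] using h⟩
      have hq0 : q0 = q := by
        rw [hL', hM] at hq
        rw [show p :: (M ++ [q0]) = (p :: M) ++ q0 :: [] by simp,
          List.getLast?_append_cons] at hq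
        simpa using hq
      have hqval : q = (p.1, !p.2) := by
        rcases q with ⟨q1, q2⟩
        rcases p with ⟨p1, p2⟩
        simp only at hq1 hq2 ⊢
        rw [hq1]
        cases q2 <;> cases p2 <;> simp_all
      have hMred : RedL M := hLred.infix ⟨[p], [q0], by rw [hL', hM]; simp⟩
      have hMne : M ≠ [] := by
        rintro rfl
        have := redL_adj hLred
          (show u.toWord = [] ++ p :: q0 :: [] by rw [hL', hM]; simp)
        rw [hq0, hqval] at this
        simpa using this rfl
      have hu' : u = FreeGroup.mk [p] * FreeGroup.mk M * (FreeGroup.mk [p])⁻¹ := by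
        have h1 : u = FreeGroup.mk (p :: (M ++ [q0])) := by
          conv_lhs => rw [← FreeGroup.mk_toWord (x := u)]
          rw [hL', hM]
        rw [h1, FreeGroup.inv_mk, FreeGroup.mul_mk, FreeGroup.mul_mk]
        congr 1
        have h2 : FreeGroup.invRev [p] = [(p.1, !p.2)] := by
          simp [FreeGroup.invRev]
        rw [h2, hq0, hqval]
        simp
      have hlenM : M.length < n := by
        rw [hL', hM] at hlen
        simp only [List.length_cons, List.length_append, List.length_singleton] at hlen
        omega
      obtain ⟨c, r, hcr, hr1, hr2⟩ := ih M.length hlenM (FreeGroup.mk M)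
        (by rw [toWord_of_red hMred]) (mk_ne_one hMred hMne)
      refine ⟨FreeGroup.mk [p] * c, r, ?_, hr1, hr2⟩
      rw [hu', hcr]
      group


theorem cycOK_reverse {α : Type} {L : List (α × Bool)} (h : CycOK L) : CycOK L.reverse := by
  refine ⟨redL_reverse h.1, ?_⟩
  intro p q hp hq
  rw [List.head?_reverse] at hp
  rw [List.getLast?_reverse] at hq
  intro h1
  exact (h.2 q p hq hp h1.symm).symm

/-! ## pure lists and strong independence -/

def emb {G : Type} (p : G × Bool) : Ltr G := (some p.1, p.2)

theorem pure_exists {v : List (Ltr G)} (hv : PureL v) :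
    ∃ v' : List (G × Bool), v = v'.map emb := by
  induction v with
  | nil => exact ⟨[], rfl⟩
  | cons l v ih =>
    obtain ⟨v', hv'⟩ := ih (fun l hl => hv l (List.mem_cons_of_mem _ hl))
    rcases l with ⟨_ | g, b⟩
    · exact absurd rfl (hv (none, b) (List.mem_cons_self))
    · exact ⟨(g, b) :: v', by rw [List.map_cons, hv']; rfl⟩

theorem evalP_emb {π : G → Equiv.Perm Ω} (v' : List (G × Bool)) (x : Ω) :
    evalP π (v'.map emb) x = FreeGroup.lift π (FreeGroup.mk v'.reverse) x := by
  induction v' generalizing x with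
  | nil => simp [evalP, FreeGroup.one_eq_mk]
  | cons l v' ih =>
    have h1 : FreeGroup.mk ((l :: v').reverse) =
        FreeGroup.mk (v'.reverse) * FreeGroup.mk [l] := by
      rw [FreeGroup.mul_mk]; simp
    rw [List.map_cons]
    show evalP π (v'.map emb) (stepP π (emb l) x) = _
    rw [ih, h1]
    have h2 : FreeGroup.lift π (FreeGroup.mk [l]) x = stepP π (emb l) x := by
      rcases l with ⟨g, _ | _⟩ <;>
        simp [FreeGroup.lift_mk, emb, stepP]
    rw [map_mul]
    show _ = (FreeGroup.lift π (FreeGroup.mk v'.reverse))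
      ((FreeGroup.lift π (FreeGroup.mk [l])) x)
    rw [h2]

theorem redL_of_map_emb {v' : List (G × Bool)} (h : RedL (v'.map emb)) : RedL v' := by
  simp only [RedL, List.Chain', List.isChain_map] at h
  apply List.IsChain.imp _ h
  intro p q hpq h1
  exact hpq (by simp [emb, h1])

/-- instantiating `hpure` from strong independence -/
theorem hpure_of_si {GS : Set (Equiv.Perm Ω)} (hsi : StronglyIndependentX GS) :
    ∀ v : List (Ltr ↥GS), RedL v → v ≠ [] → PureL v →
      {x : Ω | evalP (fun g : ↥GS => (g : Equiv.Perm Ω)) v x = x}.Finite := by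
  intro v hred hne hpure
  obtain ⟨v', rfl⟩ := pure_exists hpure
  have hv'ne : v' ≠ [] := by rintro rfl; simp at hne
  have hv'red : RedL v' := redL_of_map_emb hred
  have hrev : RedL v'.reverse := redL_reverse hv'red
  have hrevne : v'.reverse ≠ [] := by simpa using hv'ne
  have hne1 : FreeGroup.mk v'.reverse ≠ 1 := by
    classical
    exact mk_ne_one hrev hrevne
  have := keyFix hsi (FreeGroup.mk v'.reverse) hne1
  have heq : {x : Ω | evalP (fun g : ↥GS => (g : Equiv.Perm Ω)) (v'.map emb) x = x} =
      {x : Ω | FreeGroup.lift (fun g : ↥GS => (g : Equiv.Perm Ω))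
        (FreeGroup.mk v'.reverse) x = x} := by
    ext x; rw [Set.mem_setOf_eq, Set.mem_setOf_eq, evalP_emb]
  rw [heq]
  exact this

/-! ## total evaluation along a permutation -/

section Total

variable {π : G → Equiv.Perm Ω}

def stepT (π : G → Equiv.Perm Ω) (f : Equiv.Perm Ω) : Ltr G → Ω → Ω
  | (none, true), x => f x
  | (none, false), x => f⁻¹ x
  | (some g, true), x => π g x
  | (some g, false), x => (π g)⁻¹ x

def evalT (π : G → Equiv.Perm Ω) (f : Equiv.Perm Ω) : List (Ltr G) → Ω → Ω
  | [], x => x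
  | l :: L, x => evalT π f L (stepT π f l x)

theorem evalT_append {f : Equiv.Perm Ω} {A B : List (Ltr G)} {x : Ω} :
    evalT π f (A ++ B) x = evalT π f B (evalT π f A x) := by
  induction A generalizing x with
  | nil => rfl
  | cons l A ih => simp [evalT, ih]

theorem evalR_of_evalT {f : Equiv.Perm Ω} {R : Set (Ω × Ω)}
    (hfw : ∀ x, (x, f x) ∈ R) (L : List (Ltr G)) (x : Ω) :
    EvalR π R L x (evalT π f L x) := by
  induction L generalizing x with
  | nil => exact EvalR.nil x
  | cons l L ih =>
    refine EvalR.cons (y := stepT π f l x) ?_ (ih _)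
    rcases l with ⟨_ | g, _ | _⟩
    · show (f⁻¹ x, x) ∈ R
      have := hfw (f⁻¹ x)
      simpa using this
    · exact hfw x
    · show (π g) ((π g)⁻¹ x) = x
      simp
    · rfl

/-- the free-group lift agrees with total evaluation of the reversed word. -/
theorem evalT_eq_lift (f : Equiv.Perm Ω) (φ : Option G → Equiv.Perm Ω)
    (hφn : φ none = f) (hφs : ∀ g, φ (some g) = π g) :
    ∀ (L : List (Ltr G)) (x : Ω),
      evalT π f L.reverse x = FreeGroup.lift φ (FreeGroup.mk L) x := by
  intro L
  induction L with
  | nil => intro x; simp [evalT, FreeGroup.one_eq_mk]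
  | cons l L ih =>
    intro x
    have h1 : FreeGroup.mk (l :: L) = FreeGroup.mk [l] * FreeGroup.mk L := by
      rw [FreeGroup.mul_mk]; rfl
    rw [h1, map_mul]
    show _ = (FreeGroup.lift φ (FreeGroup.mk [l])) ((FreeGroup.lift φ (FreeGroup.mk L)) x)
    rw [← ih x]
    rw [List.reverse_cons, evalT_append]
    congr 1
    rcases l with ⟨_ | g, _ | _⟩ <;>
      simp [evalT, stepT, FreeGroup.lift_mk, hφn, hφs]

end Total


/-! ## the forcing poset -/

attribute [local instance] Classical.propDecidable

def wlist {G : Type} (w : FreeGroup (Option G)) : List (Ltr G) :=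
  (FreeGroup.toWord w).reverse

structure Cond {Ω G : Type} (π : G → Equiv.Perm Ω) (F : Set (Set (Ω × Ω))) where
  s : Set (Ω × Ω)
  W : Set (FreeGroup (Option G))
  hsF : s ∈ F
  hsfin : s.Finite
  hWfin : W.Finite
  hW : ∀ w ∈ W, w ≠ 1 ∧ CycOK ((FreeGroup.toWord w).reverse)

instance {Ω G : Type} (π : G → Equiv.Perm Ω) (F : Set (Set (Ω × Ω))) :
    Preorder (Cond π F) where
  le p q := p.s ⊆ q.s ∧ p.W ⊆ q.W ∧
    ∀ w ∈ p.W, ∀ x, EvalR π q.s (wlist w) x x → EvalR π p.s (wlist w) x x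
  le_refl p := ⟨subset_rfl, subset_rfl, fun _ _ _ h => h⟩
  le_trans p q r h1 h2 :=
    ⟨h1.1.trans h2.1, h1.2.1.trans h2.2.1,
      fun w hw x hx => h1.2.2 w hw x (h2.2.2 w (h1.2.1 hw) x hx)⟩

def φof {Ω G : Type} (π : G → Equiv.Perm Ω) (f : Equiv.Perm Ω) :
    Option G → Equiv.Perm Ω :=
  fun o => o.elim f π

theorem main_forcing {Ω G : Type} [Countable Ω] [Infinite Ω]
    (hMA : MASigmaCentered)
    (π : G → Equiv.Perm Ω)
    (GOOD : Equiv.Perm Ω → Prop)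
    (hGcard : Cardinal.mk (FreeGroup (Option G)) < Cardinal.continuum)
    (hpure : ∀ v : List (Ltr G), RedL v → v ≠ [] → PureL v →
      {x : Ω | evalP π v x = x}.Finite)
    (hlo : ∀ f : Equiv.Perm Ω,
      (∀ T : Set Ω, T.Finite → ∃ g, GOOD g ∧ ∀ x ∈ T, g x = f x) → GOOD f)
    (F : Set (Set (Ω × Ω)))
    (hreal : ∀ s ∈ F, ∃ g : Equiv.Perm Ω, GOOD g ∧ ∀ pr ∈ s, g pr.1 = pr.2)
    (hempty : ∅ ∈ F)
    (hfwd : ∀ s ∈ F, ∀ a, a ∉ Prod.fst '' s → {b | insert (a, b) s ∈ F}.Infinite)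
    (hbwd : ∀ s ∈ F, ∀ b, b ∉ Prod.snd '' s → {a | insert (a, b) s ∈ F}.Infinite) :
    ∃ f : Equiv.Perm Ω, GOOD f ∧
      ∀ u : FreeGroup (Option G), u ≠ 1 →
        {x : Ω | FreeGroup.lift (φof π f) u x = x}.Finite := by
  classical
  have hFunc : ∀ s ∈ F, Functional s := by
    intro s hs
    obtain ⟨g, -, hg⟩ := hreal s hs
    constructor
    · intro x y y' h1 h2
      exact (hg _ h1).symm.trans (hg _ h2)
    · intro x x' y h1 h2
      exact g.injective ((hg _ h1).trans (hg _ h2).symm)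
  set P := Cond π F with hP
  have hp0 : Nonempty P := ⟨⟨∅, ∅, hempty, Set.finite_empty, Set.finite_empty, by simp⟩⟩
  -- σ-centered
  have hσ : SigmaCentered P := by
    obtain ⟨enc, henc⟩ := exists_injective_nat (Finset (Ω × Ω))
    refine ⟨fun n => {p : P | enc p.hsfin.toFinset = n}, ?_, ?_⟩
    · intro n S hS
      rcases S.eq_empty_or_nonempty with rfl | ⟨q0, hq0⟩
      · exact ⟨hp0.some, by simp⟩
      · have hsame : ∀ q ∈ S, q.s = q0.s := by
          intro q hq
          have h1 := hS hq
          have h2 := hS hq0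
          simp only [Set.mem_setOf_eq] at h1 h2
          have := henc (h1.trans h2.symm)
          rwa [Set.Finite.toFinset_inj] at this
        refine ⟨⟨q0.s, ⋃ q ∈ (↑S : Set P), q.W, q0.hsF, q0.hsfin,
          S.finite_toSet.biUnion (fun q _ => q.hWfin), ?_⟩, ?_⟩
        · intro w hw
          rcases Set.mem_iUnion₂.1 hw with ⟨q, hq, hqw⟩
          exact q.hW w hqw
        · intro q hq
          refine ⟨by rw [hsame q hq], ?_, ?_⟩
          · exact Set.subset_biUnion_of_mem hq
          · intro w hw x hx
            show EvalR π q.s (wlist w) x x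
            rw [hsame q hq]
            exact hx
    · ext p
      simp only [Set.mem_iUnion, Set.mem_setOf_eq, Set.mem_univ, iff_true]
      exact ⟨_, rfl⟩
  -- dense sets
  set CW : Type := {w : FreeGroup (Option G) // w ≠ 1 ∧ CycOK ((FreeGroup.toWord w).reverse)}
    with hCW
  set Dfun : Ω ⊕ Ω ⊕ CW → Set P := fun i =>
    Sum.rec (fun a => {p : P | a ∈ Prod.fst '' p.s})
      (Sum.rec (fun b => {p : P | b ∈ Prod.snd '' p.s})
        (fun w => {p : P | w.1 ∈ p.W})) i with hDfun
  set 𝒟 : Set (Set P) := Set.range Dfun with h𝒟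
  have hwlist : ∀ (w : FreeGroup (Option G)), w ≠ 1 ∧ CycOK ((FreeGroup.toWord w).reverse) →
      wlist w ≠ [] ∧ CycOK (wlist w) := by
    intro w hw
    refine ⟨?_, hw.2⟩
    simp only [wlist, ne_eq, List.reverse_eq_nil_iff, FreeGroup.toWord_eq_nil_iff]
    exact hw.1
  have hdense : ∀ D ∈ 𝒟, (∀ p ∈ D, ∀ q, p ≤ q → q ∈ D) ∧ (∀ p, ∃ q ∈ D, p ≤ q) := by
    rintro D ⟨i, rfl⟩
    rcases i with a | b | w
    · constructor
      · intro p hp q hpq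
        obtain ⟨pr, hpr, he⟩ := hp
        exact ⟨pr, hpq.1 hpr, he⟩
      · intro p
        by_cases hd : a ∈ Prod.fst '' p.s
        · exact ⟨p, hd, le_refl p⟩
        · obtain ⟨Z, hZfin, hZ⟩ := core π hpure p.s p.hsfin (hFunc _ p.hsF) a
            (fun y hy => hd ⟨(a, y), hy, rfl⟩) (wlist '' p.W) (p.hWfin.image _)
            (by rintro L ⟨w, hw, rfl⟩; exact hwlist w (p.hW w hw))
          obtain ⟨b, hbB, hbZ⟩ := ((hfwd p.s p.hsF a hd).diff hZfin).nonempty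
          refine ⟨⟨insert (a, b) p.s, p.W, hbB, p.hsfin.insert _, p.hWfin, p.hW⟩,
            ⟨(a, b), Set.mem_insert _ _, rfl⟩,
            Set.subset_insert _ _, subset_rfl, ?_⟩
          intro w hw x hx
          exact hZ b hbZ (wlist w) ⟨w, hw, rfl⟩ x hx
    · constructor
      · intro p hp q hpq
        obtain ⟨pr, hpr, he⟩ := hp
        exact ⟨pr, hpq.1 hpr, he⟩
      · intro p
        by_cases hd : b ∈ Prod.snd '' p.s
        · exact ⟨p, hd, le_refl p⟩
        · obtain ⟨Z, hZfin, hZ⟩ := core' π hpure p.s p.hsfin (hFunc _ p.hsF) b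
            (fun z hz => hd ⟨(z, b), hz, rfl⟩) (wlist '' p.W) (p.hWfin.image _)
            (by rintro L ⟨w, hw, rfl⟩; exact hwlist w (p.hW w hw))
          obtain ⟨a, haB, haZ⟩ := ((hbwd p.s p.hsF b hd).diff hZfin).nonempty
          refine ⟨⟨insert (a, b) p.s, p.W, haB, p.hsfin.insert _, p.hWfin, p.hW⟩,
            ⟨(a, b), Set.mem_insert _ _, rfl⟩,
            Set.subset_insert _ _, subset_rfl, ?_⟩
          intro w hw x hx
          exact hZ a haZ (wlist w) ⟨w, hw, rfl⟩ x hx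
    · constructor
      · intro p hp q hpq
        exact hpq.2.1 hp
      · intro p
        refine ⟨⟨p.s, insert w.1 p.W, p.hsF, p.hsfin, p.hWfin.insert _, ?_⟩,
          Set.mem_insert _ _, subset_rfl, Set.subset_insert _ _, fun _ _ _ h => h⟩
        intro v hv
        rcases Set.mem_insert_iff.1 hv with rfl | hv
        · exact w.2
        · exact p.hW v hv
  have hcard𝒟 : Cardinal.mk ↥𝒟 < Cardinal.continuum := by
    refine lt_of_le_of_lt (Cardinal.mk_range_le) ?_
    have h1 : Cardinal.mk (Ω ⊕ Ω ⊕ CW) = Cardinal.mk Ω + (Cardinal.mk Ω + Cardinal.mk CW) := by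
      simp [Cardinal.mk_sum]
    rw [h1]
    have hΩ : Cardinal.mk Ω < Cardinal.continuum :=
      lt_of_le_of_lt Cardinal.mk_le_aleph0 Cardinal.aleph0_lt_continuum
    have hCWc : Cardinal.mk CW < Cardinal.continuum :=
      lt_of_le_of_lt (Cardinal.mk_subtype_le _) hGcard
    exact Cardinal.add_lt_of_lt Cardinal.aleph0_le_continuum hΩ
      (Cardinal.add_lt_of_lt Cardinal.aleph0_le_continuum hΩ hCWc)
  obtain ⟨Q, hQne, hQdir, hQdown, hQmeet⟩ := hMA P hp0 hσ 𝒟 hdense hcard𝒟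
  -- the union graph
  set R : Set (Ω × Ω) := ⋃ p ∈ Q, p.s with hR
  have hRloc : ∀ T : Set (Ω × Ω), T.Finite → T ⊆ R → ∃ q ∈ Q, T ⊆ q.s := by
    intro T hTfin
    refine Set.Finite.induction_on _ hTfin ?_ ?_
    · intro _
      obtain ⟨q, hq⟩ := hQne
      exact ⟨q, hq, Set.empty_subset _⟩
    · intro pr T hpr hTfin ih hsub
      obtain ⟨q2, hq2, hq2T⟩ := ih (fun z hz => hsub (Set.mem_insert_of_mem _ hz))
      have hprR : pr ∈ R := hsub (Set.mem_insert _ _)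
      rcases Set.mem_iUnion₂.1 hprR with ⟨p1, hp1, hprp1⟩
      obtain ⟨q, hq, hle1, hle2⟩ := hQdir p1 hp1 q2 hq2
      refine ⟨q, hq, ?_⟩
      intro z hz
      rcases Set.mem_insert_iff.1 hz with rfl | hz
      · exact hle1.1 hprp1
      · exact hle2.1 (hq2T hz)
  have hRfun : Functional R := by
    constructor
    · intro x y y' h1 h2
      obtain ⟨q, hq, hsub⟩ := hRloc {(x, y), (x, y')}
        ((Set.finite_singleton _).insert _)
        (by rintro z (rfl | rfl); exacts [h1, (by simpa using h2)])
      exact (hFunc q.s q.hsF).1 (hsub (Set.mem_insert _ _))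
        (hsub (Set.mem_insert_of_mem _ rfl))
    · intro x x' y h1 h2
      obtain ⟨q, hq, hsub⟩ := hRloc {(x, y), (x', y)}
        ((Set.finite_singleton _).insert _)
        (by rintro z (rfl | rfl); exacts [h1, (by simpa using h2)])
      exact (hFunc q.s q.hsF).2 (hsub (Set.mem_insert _ _))
        (hsub (Set.mem_insert_of_mem _ rfl))
  have htot : ∀ a : Ω, ∃ b, (a, b) ∈ R := by
    intro a
    obtain ⟨p, hpQ, hpD⟩ := hQmeet (Dfun (Sum.inl a)) ⟨Sum.inl a, rfl⟩
    obtain ⟨pr, hpr, he⟩ := hpD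
    exact ⟨pr.2, Set.mem_iUnion₂.2 ⟨p, hpQ, by rw [← he]; exact hpr⟩⟩
  have hsur : ∀ b : Ω, ∃ a, (a, b) ∈ R := by
    intro b
    obtain ⟨p, hpQ, hpD⟩ := hQmeet (Dfun (Sum.inr (Sum.inl b))) ⟨Sum.inr (Sum.inl b), rfl⟩
    obtain ⟨pr, hpr, he⟩ := hpD
    exact ⟨pr.1, Set.mem_iUnion₂.2 ⟨p, hpQ, by rw [← he]; exact hpr⟩⟩
  set f0 : Ω → Ω := fun a => (htot a).choose with hf0
  have hf0R : ∀ a, (a, f0 a) ∈ R := fun a => (htot a).choose_spec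
  have hf0bij : Function.Bijective f0 := by
    constructor
    · intro a a' h
      have h1 := hf0R a
      have h2 := hf0R a'
      rw [h] at h1
      exact hRfun.2 h1 h2
    · intro b
      obtain ⟨a, ha⟩ := hsur b
      exact ⟨a, hRfun.1 (hf0R a) ha⟩
  set fperm : Equiv.Perm Ω := Equiv.ofBijective f0 hf0bij with hfperm
  have hfpR : ∀ a, (a, fperm a) ∈ R := hf0R
  have hRagree : ∀ pr ∈ R, fperm pr.1 = pr.2 := by
    rintro ⟨x, y⟩ h
    exact hRfun.1 (hfpR x) h
  have hGOOD : GOOD fperm := by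
    apply hlo
    intro T hTfin
    obtain ⟨q, hq, hsub⟩ := hRloc ((fun x => (x, fperm x)) '' T) (hTfin.image _)
      (by rintro pr ⟨x, hx, rfl⟩; exact hfpR x)
    obtain ⟨g, hg, hgr⟩ := hreal q.s q.hsF
    exact ⟨g, hg, fun x hx => hgr _ (hsub ⟨x, hx, rfl⟩)⟩
  -- localization of evaluation
  have hloc : ∀ (L : List (Ltr G)) (x y : Ω), EvalR π R L x y →
      ∃ q ∈ Q, EvalR π q.s L x y := by
    intro L
    induction L with
    | nil =>
      intro x y h
      obtain ⟨q, hq⟩ := hQne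
      rw [evalR_nil_iff] at h
      exact ⟨q, hq, evalR_nil_iff.2 h⟩
    | cons l L ih =>
      intro x y h
      rcases evalR_cons_iff.1 h with ⟨m, hstep, hrest⟩
      obtain ⟨q2, hq2, hq2e⟩ := ih m y hrest
      rcases l with ⟨_ | g, β⟩
      · have hpair : (if β then (x, m) else (m, x)) ∈ R := by
          cases β
          · exact hstep
          · exact hstep
        rcases Set.mem_iUnion₂.1 hpair with ⟨p1, hp1, hprp1⟩
        obtain ⟨q, hq, hle1, hle2⟩ := hQdir p1 hp1 q2 hq2
        refine ⟨q, hq, EvalR.cons ?_ (evalR_mono hle2.1 hq2e)⟩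
        cases β
        · exact hle1.1 hprp1
        · exact hle1.1 hprp1
      · refine ⟨q2, hq2, EvalR.cons ?_ hq2e⟩
        cases β
        · exact hstep
        · exact hstep
  refine ⟨fperm, hGOOD, ?_⟩
  intro u hu
  obtain ⟨c, r, hcr, hr1, hr2⟩ := exists_cyc_core u.toWord.length u rfl hu
  rw [hcr, fix_conj]
  apply Set.Finite.image
  -- now handle the cyclically reduced core r
  obtain ⟨pr, hprQ, hprD⟩ := hQmeet (Dfun (Sum.inr (Sum.inr ⟨r, hr1, cycOK_reverse hr2⟩)))
    ⟨Sum.inr (Sum.inr ⟨r, hr1, cycOK_reverse hr2⟩), rfl⟩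
  have hprW : r ∈ pr.W := hprD
  have hsubfix : {x : Ω | FreeGroup.lift (φof π fperm) r x = x} ⊆
      {x : Ω | EvalR π pr.s (wlist r) x x} := by
    intro x hx
    simp only [Set.mem_setOf_eq] at hx ⊢
    have hT : evalT π fperm (wlist r) x = x := by
      have := evalT_eq_lift (π := π) fperm (φof π fperm) rfl (fun g => rfl) r.toWord x
      rw [FreeGroup.mk_toWord] at this
      rw [wlist, this, hx]
    have hRev : EvalR π R (wlist r) x x := by
      have := evalR_of_evalT (π := π) hfpR (wlist r) x
      rwa [hT] at this
    obtain ⟨q', hq', hq'e⟩ := hloc (wlist r) x x hRev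
    obtain ⟨q'', hq'', hle1, hle2⟩ := hQdir pr hprQ q' hq'
    exact hle1.2.2 r hprW x (evalR_mono hle2.1 hq'e)
  refine Set.Finite.subset ?_ hsubfix
  have hwl := hwlist r ⟨hr1, cycOK_reverse hr2⟩
  exact finite_fix pr.hsfin (hFunc _ pr.hsF) hpure hwl.2.1 hwl.1


/-! ## building the partial-isomorphism family -/

theorem isIso_trans {Ω I : Type} {ar : I → ℕ} {M₁ M₂ M₃ : RelStruct Ω I ar}
    {g h : Equiv.Perm Ω} (hg : IsIso g M₁ M₂) (hh : IsIso h M₂ M₃) :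
    IsIso (g.trans h) M₁ M₃ := by
  intro i t
  exact (hh i (fun k => g (t k))).trans (hg i t)

theorem build_F {Ω I : Type} {ar : I → ℕ} {M₁ M₂ : RelStruct Ω I ar}
    (h1 : InductivelyFlexible M₁) (g₀ : Equiv.Perm Ω) (hg₀ : IsIso g₀ M₁ M₂) :
    ∃ F : Set (Set (Ω × Ω)),
      (∀ s ∈ F, ∃ g : Equiv.Perm Ω, IsIso g M₁ M₂ ∧ ∀ pr ∈ s, g pr.1 = pr.2) ∧
      (∅ ∈ F) ∧
      (∀ s ∈ F, ∀ a, a ∉ Prod.fst '' s → {b | insert (a, b) s ∈ F}.Infinite) ∧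
      (∀ s ∈ F, ∀ b, b ∉ Prod.snd '' s → {a | insert (a, b) s ∈ F}.Infinite) := by
  obtain ⟨F₁, hfin₁, hreal₁, hempty₁, hswap₁, hfwd₁⟩ := h1
  have hswsw : ∀ s : Set (Ω × Ω), Prod.swap '' (Prod.swap '' s) = s := by
    intro s
    rw [← Set.image_comp, Prod.swap_swap_eq, Set.image_id]
  have hbwd₁ : ∀ s ∈ F₁, ∀ b, b ∉ Prod.snd '' s → {a | insert (a, b) s ∈ F₁}.Infinite := by
    intro s hs b hb
    have h2 : Prod.swap '' s ∈ F₁ := hswap₁ s hs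
    have hb2 : b ∉ Prod.fst '' (Prod.swap '' s) := by
      rintro ⟨pr, ⟨pr0, hpr0, rfl⟩, he⟩
      exact hb ⟨pr0, hpr0, he⟩
    refine Set.Infinite.mono ?_ (hfwd₁ _ h2 b hb2)
    intro c hc
    have h3 := hswap₁ _ (hc : insert (b, c) (Prod.swap '' s) ∈ F₁)
    have h4 : Prod.swap '' insert (b, c) (Prod.swap '' s) = insert (c, b) s := by
      rw [Set.image_insert_eq, hswsw]
      rfl
    rw [h4] at h3
    exact h3
  set T : Ω × Ω → Ω × Ω := fun pr => (pr.1, g₀ pr.2) with hT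
  refine ⟨(fun s => T '' s) '' F₁, ?_, ?_, ?_, ?_⟩
  · rintro s ⟨s', hs', rfl⟩
    obtain ⟨h, hhaut, hh⟩ := hreal₁ s' hs'
    refine ⟨h.trans g₀, isIso_trans hhaut hg₀, ?_⟩
    rintro pr ⟨pr0, hpr0, rfl⟩
    show g₀ (h pr0.1) = g₀ pr0.2
    rw [hh pr0 hpr0]
  · exact ⟨∅, hempty₁, Set.image_empty _⟩
  · rintro s ⟨s', hs', rfl⟩ a ha
    have hafst : a ∉ Prod.fst '' s' := by
      rintro ⟨pr0, hpr0, rfl⟩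
      exact ha ⟨T pr0, ⟨pr0, hpr0, rfl⟩, rfl⟩
    have hB := hfwd₁ s' hs' a hafst
    refine Set.Infinite.mono ?_ (hB.image (Set.injOn_of_injective g₀.injective))
    rintro b ⟨b', hb', rfl⟩
    exact ⟨insert (a, b') s', hb', by
      show T '' insert (a, b') s' = insert (a, g₀ b') (T '' s')
      rw [Set.image_insert_eq]⟩
  · rintro s ⟨s', hs', rfl⟩ b hb
    have hbsnd : g₀.symm b ∉ Prod.snd '' s' := by
      rintro ⟨pr0, hpr0, he⟩
      refine hb ⟨T pr0, ⟨pr0, hpr0, rfl⟩, ?_⟩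
      show g₀ pr0.2 = b
      rw [he]
      simp
    refine Set.Infinite.mono ?_ (hbwd₁ s' hs' (g₀.symm b) hbsnd)
    intro a ha
    exact ⟨insert (a, g₀.symm b) s', ha, by
      show T '' insert (a, g₀.symm b) s' = insert (a, b) (T '' s')
      rw [Set.image_insert_eq]
      show insert (a, g₀ (g₀.symm b)) _ = _
      rw [Equiv.apply_symm_apply]⟩

end S9

/-- (MA(σ-centered)) If `𝒢 ⊆ Sym(Ω)` is strongly independent of size `< 2^ℵ₀` and `M₁, M₂`
are isomorphic inductively flexible structures with universe `Ω`, then there is an isomorphism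
`f : M₁ → M₂` with `𝒢 ∪ {f}` strongly independent. -/
theorem stmt_9 (hMA : MASigmaCentered) (Ω I : Type) [Countable Ω] [Infinite Ω]
    (ar : I → ℕ) (𝒢 : Set (Equiv.Perm Ω)) (hsi : StronglyIndependent 𝒢)
    (hcard : Cardinal.mk ↥𝒢 < Cardinal.continuum)
    (M₁ M₂ : RelStruct Ω I ar)
    (h1 : InductivelyFlexible M₁) (h2 : InductivelyFlexible M₂)
    (hiso : ∃ g : Equiv.Perm Ω, IsIso g M₁ M₂) :
    ∃ f : Equiv.Perm Ω, IsIso f M₁ M₂ ∧ StronglyIndependent (insert f 𝒢) := by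
  classical
  obtain ⟨g₀, hg₀⟩ := hiso
  obtain ⟨F, hreal, hempty, hfwd, hbwd⟩ := S9.build_F h1 g₀ hg₀
  have hGcard : Cardinal.mk (FreeGroup (Option ↥𝒢)) < Cardinal.continuum := by
    have h1' : Cardinal.mk (FreeGroup (Option ↥𝒢)) ≤
        Cardinal.mk (List ((Option ↥𝒢) × Bool)) :=
      Cardinal.mk_le_of_injective (f := FreeGroup.toWord) FreeGroup.toWord_injective
    refine lt_of_le_of_lt h1' ?_
    rw [Cardinal.mk_list_eq_max_mk_aleph0]
    have hbase : Cardinal.mk ((Option ↥𝒢) × Bool) < Cardinal.continuum := by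
      have e1 : Cardinal.mk ((Option ↥𝒢) × Bool) =
          (Cardinal.mk ↥𝒢 + 1) * 2 := by
        simp [Cardinal.mk_prod, Cardinal.mk_option]
      rw [e1]
      refine Cardinal.mul_lt_of_lt Cardinal.aleph0_le_continuum ?_ ?_
      · exact Cardinal.add_lt_of_lt Cardinal.aleph0_le_continuum hcard
          (lt_of_lt_of_le Cardinal.one_lt_aleph0 Cardinal.aleph0_le_continuum)
      · exact_mod_cast Cardinal.nat_lt_continuum 2
    exact max_lt hbase Cardinal.aleph0_lt_continuum
  have hlo : ∀ f : Equiv.Perm Ω,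
      (∀ T : Set Ω, T.Finite → ∃ g, IsIso g M₁ M₂ ∧ ∀ x ∈ T, g x = f x) →
      IsIso f M₁ M₂ := by
    intro f hT i t
    obtain ⟨g, hg, hag⟩ := hT (Set.range t) (Set.finite_range t)
    have he : (fun k => f (t k)) = fun k => g (t k) :=
      funext fun k => (hag (t k) ⟨k, rfl⟩).symm
    rw [he]
    exact hg i t
  obtain ⟨f, hGOOD, hfix⟩ := S9.main_forcing hMA
    (fun g : ↥𝒢 => (g : Equiv.Perm Ω)) (fun g => IsIso g M₁ M₂) hGcard
    (S9.hpure_of_si hsi) hlo F hreal hempty hfwd hbwd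
  refine ⟨f, hGOOD, ?_⟩
  intro n w hw fseq hfinj hfmem
  set φ := S9.φof (fun g : ↥𝒢 => (g : Equiv.Perm Ω)) f with hφ
  have hmem' : ∀ i, fseq i = f ∨ fseq i ∈ 𝒢 := fun i => Set.mem_insert_iff.1 (hfmem i)
  set σ : Fin (n + 1) → Option ↥𝒢 := fun i =>
    if h : fseq i = f then none else some ⟨fseq i, (hmem' i).resolve_left h⟩ with hσ
  have hφσ : ∀ i, φ (σ i) = fseq i := by
    intro i
    by_cases h : fseq i = f
    · simp only [hσ, dif_pos h]
      exact h.symm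
    · simp only [hσ, dif_neg h]
      rfl
  have hσinj : Function.Injective σ := by
    intro i j hij
    by_cases hi : fseq i = f <;> by_cases hj : fseq j = f
    · exact hfinj (hi.trans hj.symm)
    · simp [hσ, hi, hj] at hij
    · simp [hσ, hi, hj] at hij
    · simp only [hσ, dif_neg hi, dif_neg hj, Option.some_inj, Subtype.mk.injEq] at hij
      exact hfinj hij
  have hwne : FreeGroup.map σ w ≠ 1 := by
    intro h
    obtain ⟨ρ, hρ⟩ := hσinj.hasLeftInverse
    have h2 : FreeGroup.map ρ (FreeGroup.map σ w) = w := by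
      rw [FreeGroup.map.comp]
      have he : ρ ∘ σ = id := funext hρ
      rw [he, FreeGroup.map.id]
    rw [h, map_one] at h2
    exact hw h2.symm
  have hlift : FreeGroup.lift fseq w = FreeGroup.lift φ (FreeGroup.map σ w) := by
    rw [S9.lift_map]
    have he : φ ∘ σ = fseq := funext hφσ
    rw [he]
  have := hfix (FreeGroup.map σ w) hwne
  have heq : {x : Ω | FreeGroup.lift fseq w x = x} =
      {x : Ω | FreeGroup.lift φ (FreeGroup.map σ w) x = x} := by
    ext x
    rw [Set.mem_setOf_eq, Set.mem_setOf_eq, hlift]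
  rw [heq]
  exact this
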